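/- Let (T, μ) be a σ-finite measure space and let C, D ∈ L²(T × T, μ ⊗ μ). Define A_C(s,t) = ∫_T C(s,u) C(t,u) dμ(u) and A_D(s,t) = ∫_T D(s,u) D(t,u) dμ(u). Then A_C and A_D belong to L²(T × T, μ ⊗ μ) and ‖A_D − A_C‖_{L²(T×T)} ≤ ‖D − C‖²_{L²(T×T)} + 2 ‖C‖_{L²(T×T)} ‖D − C‖_{L²(T×T)}. -/

import Mathlib

open MeasureTheory ENNReal

section Aux
set_option linter.unusedSectionVars false
variable {T : Type*} [MeasurableSpace T] {μ : Measure T} [SigmaFinite μ]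

lemma my_conj22 : Real.HolderConjugate 2 2 := Real.holderConjugate_iff.mpr ⟨one_lt_two, by norm_num⟩

lemma ker_est (f g : T × T → ℝ) (hfm : Measurable f) (hgm : Measurable g)
    (hf : MemLp f 2 (μ.prod μ)) (hg : MemLp g 2 (μ.prod μ)) :
    MemLp (fun p : T × T => ∫ u, f (p.1, u) * g (p.2, u) ∂μ) 2 (μ.prod μ) ∧
    eLpNorm (fun p : T × T => ∫ u, f (p.1, u) * g (p.2, u) ∂μ) 2 (μ.prod μ)
      ≤ eLpNorm f 2 (μ.prod μ) * eLpNorm g 2 (μ.prod μ) := by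
  set ν := μ.prod μ with hν
  set K : T × T → ℝ := fun p => ∫ u, f (p.1, u) * g (p.2, u) ∂μ with hKdef
  have hh : Measurable fun q : (T × T) × T => f (q.1.1, q.2) * g (q.1.2, q.2) :=
    (hfm.comp (measurable_fst.fst.prodMk measurable_snd)).mul
      (hgm.comp (measurable_fst.snd.prodMk measurable_snd))
  have hK : StronglyMeasurable K := hh.stronglyMeasurable.integral_prod_right'
  set F : T → ℝ≥0∞ := fun s => ∫⁻ u, (‖f (s, u)‖₊ : ℝ≥0∞) ^ (2:ℝ) ∂μ with hFdef
  set G : T → ℝ≥0∞ := fun t => ∫⁻ u, (‖g (t, u)‖₊ : ℝ≥0∞) ^ (2:ℝ) ∂μ with hGdef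
  have hfm2 : Measurable fun q : T × T => (‖f q‖₊ : ℝ≥0∞) ^ (2:ℝ) :=
    hfm.enorm.pow_const _
  have hgm2 : Measurable fun q : T × T => (‖g q‖₊ : ℝ≥0∞) ^ (2:ℝ) :=
    hgm.enorm.pow_const _
  have hF : Measurable F := hfm2.lintegral_prod_right'
  have hG : Measurable G := hgm2.lintegral_prod_right'
  have hpt : ∀ p : T × T, (‖K p‖₊ : ℝ≥0∞) ≤ (F p.1) ^ (1/2:ℝ) * (G p.2) ^ (1/2:ℝ) := by
    intro p
    calc (‖K p‖₊ : ℝ≥0∞) ≤ ∫⁻ u, ‖f (p.1, u) * g (p.2, u)‖₊ ∂μ :=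
          enorm_integral_le_lintegral_enorm _
      _ = ∫⁻ u, ((fun u => (‖f (p.1, u)‖₊ : ℝ≥0∞)) * fun u => (‖g (p.2, u)‖₊ : ℝ≥0∞)) u ∂μ := by
          simp [nnnorm_mul, ENNReal.coe_mul]
      _ ≤ (F p.1) ^ (1/2:ℝ) * (G p.2) ^ (1/2:ℝ) :=
          ENNReal.lintegral_mul_le_Lp_mul_Lq μ my_conj22
            ((hfm.comp (measurable_const.prodMk measurable_id)).enorm.aemeasurable)
            ((hgm.comp (measurable_const.prodMk measurable_id)).enorm.aemeasurable)
  have hsq : ∀ p : T × T, (‖K p‖₊ : ℝ≥0∞) ^ (2:ℝ) ≤ F p.1 * G p.2 := by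
    intro p
    calc (‖K p‖₊ : ℝ≥0∞) ^ (2:ℝ) ≤ ((F p.1) ^ (1/2:ℝ) * (G p.2) ^ (1/2:ℝ)) ^ (2:ℝ) :=
          ENNReal.rpow_le_rpow (hpt p) (by norm_num)
      _ = F p.1 * G p.2 := by
          rw [ENNReal.mul_rpow_of_nonneg _ _ (by norm_num : (0:ℝ) ≤ 2),
            ← ENNReal.rpow_mul, ← ENNReal.rpow_mul]
          norm_num
  have key : ∫⁻ p, (‖K p‖₊ : ℝ≥0∞) ^ (2:ℝ) ∂ν ≤
      (∫⁻ s, F s ∂μ) * ∫⁻ t, G t ∂μ := by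
    calc ∫⁻ p, (‖K p‖₊ : ℝ≥0∞) ^ (2:ℝ) ∂ν ≤ ∫⁻ p : T × T, F p.1 * G p.2 ∂ν :=
          lintegral_mono hsq
      _ = (∫⁻ s, F s ∂μ) * ∫⁻ t, G t ∂μ :=
          lintegral_prod_mul hF.aemeasurable hG.aemeasurable
  have hFtot : ∫⁻ s, F s ∂μ = ∫⁻ q, (‖f q‖₊ : ℝ≥0∞) ^ (2:ℝ) ∂ν :=
    (lintegral_prod _ hfm2.aemeasurable).symm
  have hGtot : ∫⁻ t, G t ∂μ = ∫⁻ q, (‖g q‖₊ : ℝ≥0∞) ^ (2:ℝ) ∂ν :=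
    (lintegral_prod _ hgm2.aemeasurable).symm
  have heq : ∀ (h : T × T → ℝ), eLpNorm h 2 ν
      = (∫⁻ q, (‖h q‖₊ : ℝ≥0∞) ^ (2:ℝ) ∂ν) ^ (1/2:ℝ) := by
    intro h
    rw [eLpNorm_eq_lintegral_rpow_enorm_toReal (by norm_num) (by norm_num)]
    norm_num
    rfl
  have hle : eLpNorm K 2 ν ≤ eLpNorm f 2 ν * eLpNorm g 2 ν := by
    rw [heq K, heq f, heq g, ← hFtot, ← hGtot,
      ← ENNReal.mul_rpow_of_nonneg _ _ (by norm_num : (0:ℝ) ≤ 1/2)]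
    exact ENNReal.rpow_le_rpow key (by norm_num)
  exact ⟨⟨hK.aestronglyMeasurable,
    lt_of_le_of_lt hle (ENNReal.mul_lt_top hf.eLpNorm_lt_top hg.eLpNorm_lt_top)⟩, hle⟩

lemma slice_memLp (f : T × T → ℝ) (hfm : Measurable f) (hf : MemLp f 2 (μ.prod μ)) :
    ∀ᵐ s ∂μ, MemLp (fun u => f (s, u)) 2 μ := by
  have hfm2 : Measurable fun q : T × T => (‖f q‖₊ : ℝ≥0∞) ^ (2:ℝ) :=
    hfm.enorm.pow_const _
  have hfin : ∫⁻ q, (‖f q‖₊ : ℝ≥0∞) ^ (2:ℝ) ∂(μ.prod μ) < ∞ := by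
    have := lintegral_rpow_enorm_lt_top_of_eLpNorm_lt_top
      (by norm_num : (2:ℝ≥0∞) ≠ 0) (by norm_num) hf.eLpNorm_lt_top
    exact (by simpa using this : ∫⁻ q, ‖f q‖ₑ ^ (2:ℝ) ∂(μ.prod μ) < ∞)
  rw [lintegral_prod _ hfm2.aemeasurable] at hfin
  have hF : Measurable fun s => ∫⁻ u, (‖f (s, u)‖₊ : ℝ≥0∞) ^ (2:ℝ) ∂μ :=
    hfm2.lintegral_prod_right'
  filter_upwards [ae_lt_top hF hfin.ne] with s hs
  refine ⟨(hfm.comp (measurable_const.prodMk measurable_id)).aestronglyMeasurable, ?_⟩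
  rw [eLpNorm_eq_lintegral_rpow_enorm_toReal (by norm_num) (by norm_num)]
  simp only [ENNReal.toReal_ofNat]
  exact ENNReal.rpow_lt_top_of_nonneg (by norm_num) hs.ne

lemma memLp_mul_integrable {φ ψ : T → ℝ} (hφ : MemLp φ 2 μ) (hψ : MemLp ψ 2 μ) :
    Integrable (fun u => φ u * ψ u) μ := by
  rw [← memLp_one_iff_integrable]
  have : (1 : ℝ≥0∞) / 1 = 1 / 2 + 1 / 2 := by
    rw [ENNReal.div_add_div_same]; norm_num; rw [ENNReal.div_self (by norm_num) (by norm_num)]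
  simpa [smul_eq_mul, Pi.mul_def] using MemLp.smul (f := ψ) (φ := φ) (r := 1) hψ hφ

end Aux

/-- The inequality from the proof of Corollary 1: for `C, D ∈ L²(T × T)`, the kernels
`A_C(s,t) = ∫ C(s,u) C(t,u) dμ(u)` and `A_D(s,t) = ∫ D(s,u) D(t,u) dμ(u)` belong to
`L²(T × T)` and `‖A_D − A_C‖_{L²} ≤ ‖D − C‖²_{L²} + 2 ‖C‖_{L²} ‖D − C‖_{L²}`. -/
theorem A_kernel_perturbation
    {T : Type*} [MeasurableSpace T] (μ : Measure T) [SigmaFinite μ]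
    (C D : T × T → ℝ)
    (hCm : Measurable C) (hDm : Measurable D)
    (hC : MemLp C 2 (μ.prod μ)) (hD : MemLp D 2 (μ.prod μ))
    (AC AD : T × T → ℝ)
    (hAC : AC = fun p => ∫ u, C (p.1, u) * C (p.2, u) ∂μ)
    (hAD : AD = fun p => ∫ u, D (p.1, u) * D (p.2, u) ∂μ) :
    MemLp AC 2 (μ.prod μ) ∧ MemLp AD 2 (μ.prod μ)
      ∧ eLpNorm (AD - AC) 2 (μ.prod μ)
          ≤ eLpNorm (D - C) 2 (μ.prod μ) ^ 2
            + 2 * eLpNorm C 2 (μ.prod μ) * eLpNorm (D - C) 2 (μ.prod μ) := by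
  set ν := μ.prod μ with hν
  have hEm : Measurable (D - C) := hDm.sub hCm
  have hE : MemLp (D - C) 2 ν := hD.sub hC
  obtain ⟨memAC, -⟩ := ker_est C C hCm hCm hC hC
  obtain ⟨memAD, -⟩ := ker_est D D hDm hDm hD hD
  obtain ⟨mem1, le1⟩ := ker_est (D - C) D hEm hDm hE hD
  obtain ⟨mem2, le2⟩ := ker_est C (D - C) hCm hEm hC hE
  refine ⟨hAC ▸ memAC, hAD ▸ memAD, ?_⟩
  set K1 : T × T → ℝ := fun p => ∫ u, (D - C) (p.1, u) * D (p.2, u) ∂μ with hK1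
  set K2 : T × T → ℝ := fun p => ∫ u, C (p.1, u) * (D - C) (p.2, u) ∂μ with hK2
  -- a.e. decomposition
  have hslice1 : ∀ᵐ p ∂ν, MemLp (fun u => C (p.1, u)) 2 μ ∧ MemLp (fun u => D (p.1, u)) 2 μ :=
    MeasureTheory.Measure.quasiMeasurePreserving_fst.ae
      ((slice_memLp C hCm hC).and (slice_memLp D hDm hD))
  have hslice2 : ∀ᵐ p ∂ν, MemLp (fun u => C (p.2, u)) 2 μ ∧ MemLp (fun u => D (p.2, u)) 2 μ :=
    MeasureTheory.Measure.quasiMeasurePreserving_snd.ae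
      ((slice_memLp C hCm hC).and (slice_memLp D hDm hD))
  have hdecomp : (AD - AC) =ᵐ[ν] fun p => K1 p + K2 p := by
    filter_upwards [hslice1, hslice2] with p h1 h2
    have hE1 : MemLp (fun u => D (p.1, u) - C (p.1, u)) 2 μ := h1.2.sub h1.1
    have hE2 : MemLp (fun u => D (p.2, u) - C (p.2, u)) 2 μ := h2.2.sub h2.1
    have i1 : Integrable (fun u => (D (p.1, u) - C (p.1, u)) * D (p.2, u)) μ :=
      memLp_mul_integrable hE1 h2.2
    have i2 : Integrable (fun u => C (p.1, u) * (D (p.2, u) - C (p.2, u))) μ :=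
      memLp_mul_integrable h1.1 hE2
    have i3 : Integrable (fun u => C (p.1, u) * C (p.2, u)) μ :=
      memLp_mul_integrable h1.1 h2.1
    have hDD : (fun u => D (p.1, u) * D (p.2, u)) =
        fun u => ((D (p.1, u) - C (p.1, u)) * D (p.2, u)
          + C (p.1, u) * (D (p.2, u) - C (p.2, u))) + C (p.1, u) * C (p.2, u) :=
      funext fun u => by ring
    have : AD p = (∫ u, (D (p.1, u) - C (p.1, u)) * D (p.2, u) ∂μ)
        + (∫ u, C (p.1, u) * (D (p.2, u) - C (p.2, u)) ∂μ)
        + ∫ u, C (p.1, u) * C (p.2, u) ∂μ := by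
      rw [hAD]
      simp only
      rw [hDD]
      have e1 := integral_add (i1.add i2) i3
      have e2 := integral_add i1 i2
      simp only [Pi.add_apply] at e1 e2
      rw [e1, e2]
    simp only [Pi.sub_apply, hK1, hK2, this, hAC]
    ring
  calc eLpNorm (AD - AC) 2 ν = eLpNorm (fun p => K1 p + K2 p) 2 ν :=
        eLpNorm_congr_ae hdecomp
    _ ≤ eLpNorm K1 2 ν + eLpNorm K2 2 ν := eLpNorm_add_le mem1.1 mem2.1 one_le_two
    _ ≤ eLpNorm (D - C) 2 ν * eLpNorm D 2 ν + eLpNorm C 2 ν * eLpNorm (D - C) 2 ν :=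
        add_le_add le1 le2
    _ ≤ eLpNorm (D - C) 2 ν * (eLpNorm C 2 ν + eLpNorm (D - C) 2 ν)
        + eLpNorm C 2 ν * eLpNorm (D - C) 2 ν := by
        gcongr
        have hD' : D = C + (D - C) := by ext q; simp
        calc eLpNorm D 2 ν = eLpNorm (C + (D - C)) 2 ν := by rw [← hD']
          _ ≤ eLpNorm C 2 ν + eLpNorm (D - C) 2 ν := eLpNorm_add_le hC.1 hE.1 one_le_two
    _ = eLpNorm (D - C) 2 ν ^ 2 + 2 * eLpNorm C 2 ν * eLpNorm (D - C) 2 ν := by ring
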